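/- Let c ∈ ℝ and μ ∈ ℝ with μ ≠ 1/4 and μ ≠ 1, suppose D := (4cμ + c − 11μ + 2)² + 8c(4μ−1)(−c + μ + 2) ≥ 0, and set A₈ = √D. Then both points (x₄, y₄) = (−(4cμ + A₈ + c − 11μ + 2)/(16μ − 4), (8cμ² − 10cμ + (2μ−1)A₈ + c + 18μ² − 11μ + 2)/(8(μ−1)(4μ−1))) and (x₅, y₅) = ((−4cμ + A₈ − c + 11μ − 2)/(16μ − 4), (8cμ² − 10cμ − (2μ−1)A₈ + c + 18μ² − 11μ + 2)/(8(μ−1)(4μ−1))) are equilibria of the system ẋ = x[(c−4)y − 5μ + 4μ(x+y) + x(x+3y−3) + 2], ẏ = y[c(y−1) + x(x+3y−1)]. -/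

import Mathlib

set_option maxHeartbeats 4000000 in
/-- The two interior fixed points of the ALLD → ALLC replicator-mutator
system, given by explicit formulas involving `A₈`. -/
theorem interior_fixed_points_ALLD_to_ALLC (c μ : ℝ)
    (hμ1 : μ ≠ 1 / 4) (hμ2 : μ ≠ 1)
    (hD : 0 ≤ (4 * c * μ + c - 11 * μ + 2) ^ 2
              + 8 * c * (4 * μ - 1) * (-c + μ + 2))
    (A8 : ℝ)
    (hA8 : A8 = Real.sqrt ((4 * c * μ + c - 11 * μ + 2) ^ 2
                + 8 * c * (4 * μ - 1) * (-c + μ + 2)))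
    (x4 y4 x5 y5 : ℝ)
    (hx4 : x4 = -(4 * c * μ + A8 + c - 11 * μ + 2) / (16 * μ - 4))
    (hy4 : y4 = (8 * c * μ ^ 2 - 10 * c * μ + (2 * μ - 1) * A8 + c
                 + 18 * μ ^ 2 - 11 * μ + 2) / (8 * (μ - 1) * (4 * μ - 1)))
    (hx5 : x5 = (-(4 * c * μ) + A8 - c + 11 * μ - 2) / (16 * μ - 4))
    (hy5 : y5 = (8 * c * μ ^ 2 - 10 * c * μ - (2 * μ - 1) * A8 + c
                 + 18 * μ ^ 2 - 11 * μ + 2) / (8 * (μ - 1) * (4 * μ - 1))) :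
    (x4 * ((c - 4) * y4 - 5 * μ + 4 * μ * (x4 + y4) + x4 * (x4 + 3 * y4 - 3) + 2) = 0 ∧
     y4 * (c * (y4 - 1) + x4 * (x4 + 3 * y4 - 1)) = 0) ∧
    (x5 * ((c - 4) * y5 - 5 * μ + 4 * μ * (x5 + y5) + x5 * (x5 + 3 * y5 - 3) + 2) = 0 ∧
     y5 * (c * (y5 - 1) + x5 * (x5 + 3 * y5 - 1)) = 0) := by

  have h1 : (16 * μ - 4) ≠ 0 := fun h => hμ1 (by linarith)
  have h2 : (μ - 1) ≠ 0 := sub_ne_zero.mpr hμ2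
  have h3 : (4 * μ - 1) ≠ 0 := fun h => hμ1 (by linarith)
  have key : A8 ^ 2 - ((4 * c * μ + c - 11 * μ + 2) ^ 2
              + 8 * c * (4 * μ - 1) * (-c + μ + 2)) = 0 := by
    rw [hA8, Real.sq_sqrt hD]; ring
  refine ⟨⟨?_, ?_⟩, ?_, ?_⟩
  · have e : x4 * ((c - 4) * y4 - 5 * μ + 4 * μ * (x4 + y4) + x4 * (x4 + 3 * y4 - 3) + 2)
        = (8 + 4*A8^1 + (-108)*μ^1 + (-32)*μ^1*A8^1 + 480*μ^2 + 64*μ^2*A8^1 + (-704)*μ^3 + 4*c^1 + (-16)*c^1*μ^1 + (-64)*c^1*μ^2 + 256*c^1*μ^3) * (A8 ^ 2 - ((4 * c * μ + c - 11 * μ + 2) ^ 2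
              + 8 * c * (4 * μ - 1) * (-c + μ + 2)))
          / ((16 * μ - 4) ^ 3 * (8 * (μ - 1) * (4 * μ - 1))) := by
      rw [hx4, hy4, show (16 * μ - 4) = 4 * (4 * μ - 1) by ring]; field_simp; ring
    rw [e, key, mul_zero, zero_div]
  · have e : y4 * (c * (y4 - 1) + x4 * (x4 + 3 * y4 - 1))
        = ((-8) + 4*A8^1 + 108*μ^1 + (-40)*μ^1*A8^1 + (-552)*μ^2 + 128*μ^2*A8^1 + 1280*μ^3 + (-128)*μ^3*A8^1 + (-1152)*μ^4 + (-4)*c^1 + 72*c^1*μ^1 + (-416)*c^1*μ^2 + 896*c^1*μ^3 + (-512)*c^1*μ^4) * (A8 ^ 2 - ((4 * c * μ + c - 11 * μ + 2) ^ 2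
              + 8 * c * (4 * μ - 1) * (-c + μ + 2)))
          / ((16 * μ - 4) ^ 2 * (8 * (μ - 1) * (4 * μ - 1)) ^ 2) := by
      rw [hx4, hy4, show (16 * μ - 4) = 4 * (4 * μ - 1) by ring]; have h3' : μ * 4 - 1 ≠ 0 := fun h => h3 (by linarith); field_simp; ring
    rw [e, key, mul_zero, zero_div]
  · have e : x5 * ((c - 4) * y5 - 5 * μ + 4 * μ * (x5 + y5) + x5 * (x5 + 3 * y5 - 3) + 2)
        = (8 + (-4)*A8^1 + (-108)*μ^1 + 32*μ^1*A8^1 + 480*μ^2 + (-64)*μ^2*A8^1 + (-704)*μ^3 + 4*c^1 + (-16)*c^1*μ^1 + (-64)*c^1*μ^2 + 256*c^1*μ^3) * (A8 ^ 2 - ((4 * c * μ + c - 11 * μ + 2) ^ 2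
              + 8 * c * (4 * μ - 1) * (-c + μ + 2)))
          / ((16 * μ - 4) ^ 3 * (8 * (μ - 1) * (4 * μ - 1))) := by
      rw [hx5, hy5, show (16 * μ - 4) = 4 * (4 * μ - 1) by ring]; field_simp; ring
    rw [e, key, mul_zero, zero_div]
  · have e : y5 * (c * (y5 - 1) + x5 * (x5 + 3 * y5 - 1))
        = ((-8) + (-4)*A8^1 + 108*μ^1 + 40*μ^1*A8^1 + (-552)*μ^2 + (-128)*μ^2*A8^1 + 1280*μ^3 + 128*μ^3*A8^1 + (-1152)*μ^4 + (-4)*c^1 + 72*c^1*μ^1 + (-416)*c^1*μ^2 + 896*c^1*μ^3 + (-512)*c^1*μ^4) * (A8 ^ 2 - ((4 * c * μ + c - 11 * μ + 2) ^ 2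
              + 8 * c * (4 * μ - 1) * (-c + μ + 2)))
          / ((16 * μ - 4) ^ 2 * (8 * (μ - 1) * (4 * μ - 1)) ^ 2) := by
      rw [hx5, hy5, show (16 * μ - 4) = 4 * (4 * μ - 1) by ring]; have h3' : μ * 4 - 1 ≠ 0 := fun h => h3 (by linarith); field_simp; ring
    rw [e, key, mul_zero, zero_div]
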